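/- arXiv:2301.07172 — 3 statements merged into one kernel-verified Lean document; each statement's English description precedes it below -/
import Mathlib

section
/- Let m ≥ 1. Then the m-th eigenvalue of the integral operator T_{𝕂,ρ} satisfies λ_{m,ρ} ≤ Σ_{j≥m} λ_j ‖φ_j‖²_ρ, where ‖φ_j‖²_ρ = ∫_X φ_j(y)² dρ(y). -/
open MeasureTheory ProbabilityTheory

lemma aux_integrable {α : Type*} [MeasurableSpace α] [TopologicalSpace α]
    [OpensMeasurableSpace α] {μ : Measure α} [IsFiniteMeasure μ] {S : Set α}
    (hS : IsCompact S) (hμ : μ Sᶜ = 0) {g : α → ℝ} (hg : Continuous g) :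
    Integrable g μ := by
  obtain ⟨C, hC⟩ := hS.exists_bound_of_continuousOn hg.continuousOn
  refine ⟨hg.aestronglyMeasurable, HasFiniteIntegral.of_bounded (C := C) ?_⟩
  have hae : ∀ᵐ x ∂μ, x ∈ S := by
    rw [ae_iff]
    exact measure_mono_null (fun x hx => hx) hμ
  filter_upwards [hae] with x hx using hC x hx

/-- (Theorem 1, first part.)  Let `K` be a continuous symmetric positive
semi-definite Mercer kernel on a compact set `X ⊆ ℝ^d`, with injective integral operator on
`L²(X, dP)` having orthonormal (complete) continuous eigenfunctions `φ m` and positive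
nonincreasing eigenvalues `lam m` (indexed from `0`, so `lam m` is the paper's
`λ_{m+1}`), and Mercer expansion `K x y = Σ_m lam m * φ m x * φ m y`.  Let `ρm` be a
probability measure on `X`, absolutely continuous w.r.t. `P` with bounded density, and let
`lamρ m` be the eigenvalues of the integral operator `T_{K,ρ}` on `L²(X, dρ)`, listed
decreasingly with multiplicity (orthonormal eigenfunctions `ψ m`, complete for the operator).
Then for every `m`, `lamρ m ≤ Σ_{j ≥ m} lam j * ‖φ j‖²_ρ`. -/
theorem eigenvalue_bound_unknown_measure
    {d : ℕ} (hd : 1 ≤ d)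
    {X : Set (EuclideanSpace ℝ (Fin d))} (hXcomp : IsCompact X) (hXne : X.Nonempty)
    (P ρm : Measure (EuclideanSpace ℝ (Fin d)))
    [IsProbabilityMeasure P] [IsProbabilityMeasure ρm]
    (hPX : P X = 1) (hρX : ρm X = 1)
    (K : EuclideanSpace ℝ (Fin d) → EuclideanSpace ℝ (Fin d) → ℝ)
    (hKcont : Continuous fun p : EuclideanSpace ℝ (Fin d) × EuclideanSpace ℝ (Fin d) => K p.1 p.2)
    (hKsymm : ∀ x y, K x y = K y x)
    (lam : ℕ → ℝ) (φ : ℕ → EuclideanSpace ℝ (Fin d) → ℝ)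
    (hlam_pos : ∀ m, 0 < lam m) (hlam_anti : Antitone lam)
    (hφcont : ∀ m, Continuous (φ m))
    (hφorth : ∀ i j, ∫ y, φ i y * φ j y ∂P = if i = j then 1 else 0)
    (hφcomplete : ∀ f : EuclideanSpace ℝ (Fin d) → ℝ, MemLp f 2 P →
      (∀ m, ∫ y, f y * φ m y ∂P = 0) → f =ᵐ[P] 0)
    (hMercer : ∀ x y, HasSum (fun m => lam m * φ m x * φ m y) (K x y))
    (hac : ρm ≪ P)
    (hrnBdd : ∃ M : ℝ, ∀ᵐ x ∂P, (ρm.rnDeriv P x).toReal ≤ M)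
    (lamρ : ℕ → ℝ) (ψ : ℕ → EuclideanSpace ℝ (Fin d) → ℝ)
    (hlamρ_nonneg : ∀ m, 0 ≤ lamρ m) (hlamρ_anti : Antitone lamρ)
    (hψcont : ∀ m, Continuous (ψ m))
    (hψorth : ∀ i j, ∫ y, ψ i y * ψ j y ∂ρm = if i = j then 1 else 0)
    (hψeig : ∀ m x, ∫ y, K x y * ψ m y ∂ρm = lamρ m * ψ m x)
    (hψcomplete : ∀ f : EuclideanSpace ℝ (Fin d) → ℝ, MemLp f 2 ρm →
      (∀ m, ∫ y, f y * ψ m y ∂ρm = 0) → ∀ x, ∫ y, K x y * f y ∂ρm = 0)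
    (m : ℕ) :
    lamρ m ≤ ∑' j : {j : ℕ // m ≤ j}, lam j * ∫ y, (φ j y) ^ 2 ∂ρm := by
  classical
  have hXm : MeasurableSet X := hXcomp.isClosed.measurableSet
  have hXc : ρm Xᶜ = 0 := (prob_compl_eq_zero_iff hXm).mpr hρX
  have hInt : ∀ {g : EuclideanSpace ℝ (Fin d) → ℝ}, Continuous g → Integrable g ρm :=
    fun hg => aux_integrable hXcomp hXc hg
  have hXc2 : (ρm.prod ρm) (X ×ˢ X)ᶜ = 0 := by
    rw [prob_compl_eq_zero_iff (hXm.prod hXm), Measure.prod_prod, hρX, mul_one]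
  have hInt2 : ∀ {g : EuclideanSpace ℝ (Fin d) × EuclideanSpace ℝ (Fin d) → ℝ},
      Continuous g → Integrable g (ρm.prod ρm) :=
    fun hg => aux_integrable (hXcomp.prod hXcomp) hXc2 hg
  -- coefficients
  set c : ℕ → ℕ → ℝ := fun j i => ∫ y, φ j y * ψ i y ∂ρm with hcdef
  -- a nonzero vector in the kernel of the constraint map
  let L : (Fin (m + 1) → ℝ) →ₗ[ℝ] (Fin m → ℝ) :=
    { toFun := fun a j => ∑ i, a i * c j i
      map_add' := by
        intro a b; funext j
        simp [add_mul, Finset.sum_add_distrib]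
      map_smul' := by
        intro r a; funext j
        simp [Finset.mul_sum, mul_assoc] }
  have hker : LinearMap.ker L ≠ ⊥ := by
    apply LinearMap.ker_ne_bot_of_finrank_lt
    simp [Module.finrank_fin_fun]
  obtain ⟨a, haker, ha0⟩ := (Submodule.ne_bot_iff _).mp hker
  have haL : ∀ j : Fin m, ∑ i, a i * c j i = 0 := by
    intro j
    have h := LinearMap.mem_ker.mp haker
    exact congrFun h j
  -- the test function
  set f : EuclideanSpace ℝ (Fin d) → ℝ := fun x => ∑ i : Fin (m + 1), a i * ψ i x with hfdef
  have hfcont : Continuous f := by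
    rw [hfdef]; exact continuous_finset_sum _ fun i _ => continuous_const.mul (hψcont i)
  set S : ℝ := ∑ i : Fin (m + 1), (a i) ^ 2 with hSdef
  have hS : 0 < S := by
    obtain ⟨i, hi⟩ := Function.ne_iff.mp ha0
    have h1 : (a i) ^ 2 ≤ S :=
      Finset.single_le_sum (fun k _ => sq_nonneg (a k)) (Finset.mem_univ i)
    have hi' : a i ≠ 0 := by simpa using hi
    have h2 : 0 < (a i) ^ 2 := by positivity
    linarith
  -- basic integral computations
  have hmix : ∀ (j : ℕ) (n : ℕ) (v : Fin n → ℝ),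
      ∫ y, φ j y * (∑ i, v i * ψ i y) ∂ρm = ∑ i, v i * c j i := by
    intro j n v
    have hrw : ∀ y : EuclideanSpace ℝ (Fin d),
        φ j y * (∑ i, v i * ψ i y) = ∑ i, v i * (φ j y * ψ i y) := fun y => by
      rw [Finset.mul_sum]; exact Finset.sum_congr rfl fun i _ => by ring
    simp_rw [hrw]
    rw [integral_finset_sum (f := fun (i : Fin n) y => v i * (φ j y * ψ i y)) _ fun i _ =>
      hInt (continuous_const.mul ((hφcont j).mul (hψcont i)))]
    exact Finset.sum_congr rfl fun i _ => integral_const_mul _ _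
  have hpair : ∀ (n : ℕ) (v w : Fin n → ℝ),
      ∫ y, (∑ i, v i * ψ i y) * (∑ i, w i * ψ i y) ∂ρm = ∑ i, v i * w i := by
    intro n v w
    have hrw : ∀ y : EuclideanSpace ℝ (Fin d),
        (∑ i, v i * ψ i y) * (∑ i, w i * ψ i y)
          = ∑ i, ∑ k, v i * w k * (ψ i y * ψ k y) := fun y => by
      rw [Finset.sum_mul_sum]
      exact Finset.sum_congr rfl fun i _ => Finset.sum_congr rfl fun k _ => by ring
    simp_rw [hrw]
    rw [integral_finset_sum
        (f := fun (i : Fin n) y => ∑ k : Fin n, v i * w k * (ψ i y * ψ k y)) _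
        fun i _ => hInt (continuous_finset_sum _ fun k _ =>
          continuous_const.mul ((hψcont i).mul (hψcont k)))]
    refine Finset.sum_congr rfl fun i _ => ?_
    rw [integral_finset_sum (f := fun (k : Fin n) y => v i * w k * (ψ i y * ψ k y)) _
      fun k _ => hInt (continuous_const.mul ((hψcont i).mul (hψcont k)))]
    have hterm : ∀ k : Fin n, ∫ y, v i * w k * (ψ i y * ψ k y) ∂ρm
        = v i * w k * (if (i : ℕ) = (k : ℕ) then 1 else 0) := fun k => by
      rw [integral_const_mul, hψorth]
    simp_rw [hterm]
    simp [Fin.val_inj]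
  -- b coefficients
  set b : ℕ → ℝ := fun j => ∫ y, φ j y * f y ∂ρm with hbdef
  have hbf : ∀ j, b j = ∑ i : Fin (m + 1), a i * c j i := fun j => hmix j _ a
  have hb0 : ∀ j, j < m → b j = 0 := by
    intro j hj
    rw [hbf]
    exact haL ⟨j, hj⟩
  -- Bessel-type bound
  have hBessel : ∀ j, (b j) ^ 2 ≤ S * ∫ y, (φ j y) ^ 2 ∂ρm := by
    intro j
    have h1 : (b j) ^ 2 ≤ S * ∑ i : Fin (m + 1), (c j i) ^ 2 := by
      rw [hbf]
      exact Finset.sum_mul_sq_le_sq_mul_sq _ _ _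
    have h2 : ∑ i : Fin (m + 1), (c j i) ^ 2 ≤ ∫ y, (φ j y) ^ 2 ∂ρm := by
      have hgc : Continuous fun y => ∑ i : Fin (m + 1), c j i * ψ i y :=
        continuous_finset_sum _ fun i _ => continuous_const.mul (hψcont i)
      have h0 : 0 ≤ ∫ y, (φ j y - ∑ i : Fin (m + 1), c j i * ψ i y) ^ 2 ∂ρm :=
        integral_nonneg fun y => sq_nonneg _
      have hexp : ∫ y, (φ j y - ∑ i : Fin (m + 1), c j i * ψ i y) ^ 2 ∂ρm
          = ∫ y, (φ j y) ^ 2 ∂ρm - ∑ i : Fin (m + 1), (c j i) ^ 2 := by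
        have hrw : ∀ y : EuclideanSpace ℝ (Fin d),
            (φ j y - ∑ i : Fin (m + 1), c j i * ψ i y) ^ 2
              = (φ j y) ^ 2 - 2 * (φ j y * (∑ i : Fin (m + 1), c j i * ψ i y))
                + (∑ i : Fin (m + 1), c j i * ψ i y) * (∑ i : Fin (m + 1), c j i * ψ i y) :=
          fun y => by ring
        simp_rw [hrw]
        rw [integral_add
            (f := fun y => (φ j y) ^ 2 - 2 * (φ j y * (∑ i : Fin (m + 1), c j i * ψ i y)))
            (g := fun y => (∑ i : Fin (m + 1), c j i * ψ i y) * (∑ i : Fin (m + 1), c j i * ψ i y))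
            ((hInt ((hφcont j).pow 2)).sub
              (hInt (continuous_const.mul ((hφcont j).mul hgc))))
            (hInt (hgc.mul hgc)),
          integral_sub (f := fun y => (φ j y) ^ 2)
            (g := fun y => 2 * (φ j y * (∑ i : Fin (m + 1), c j i * ψ i y)))
            (hInt ((hφcont j).pow 2))
            (hInt (continuous_const.mul ((hφcont j).mul hgc))),
          integral_const_mul, hmix j _ (fun i => c j i), hpair]
        have : ∑ i : Fin (m + 1), c j i * c j i = ∑ i : Fin (m + 1), (c j i) ^ 2 := by
          simp [sq]
        rw [this]
        ring
      linarith [hexp ▸ h0]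
    nlinarith [hS.le]
  -- summability of the majorant series
  have hint_eq : ∀ j, ∫ y, lam j * φ j y * φ j y ∂ρm = lam j * ∫ y, (φ j y) ^ 2 ∂ρm := by
    intro j
    rw [← integral_const_mul]
    exact integral_congr_ae (ae_of_all _ fun y => by ring)
  have hKd : Continuous fun y : EuclideanSpace ℝ (Fin d) => K y y :=
    hKcont.comp (continuous_id.prodMk continuous_id)
  have hdiag : HasSum (fun j => ∫ y, lam j * φ j y * φ j y ∂ρm) (∫ y, K y y ∂ρm) := by
    apply hasSum_integral_of_dominated_convergence (fun j y => lam j * φ j y * φ j y)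
    · intro n
      exact ((continuous_const.mul (hφcont n)).mul (hφcont n)).aestronglyMeasurable
    · intro n
      refine ae_of_all _ fun y => ?_
      have h1 : 0 ≤ lam n * φ n y * φ n y := by
        rw [mul_assoc]; exact mul_nonneg (hlam_pos n).le (mul_self_nonneg _)
      rw [Real.norm_of_nonneg h1]
    · exact ae_of_all _ fun y => (hMercer y y).summable
    · exact (hInt hKd).congr (ae_of_all _ fun y => ((hMercer y y).tsum_eq).symm)
    · exact ae_of_all _ fun y => hMercer y y
  have hSummable : Summable fun j => lam j * ∫ y, (φ j y) ^ 2 ∂ρm :=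
    hdiag.summable.congr hint_eq
  -- the key HasSum identity over the product measure
  have hfprodcont : Continuous fun z : EuclideanSpace ℝ (Fin d) × EuclideanSpace ℝ (Fin d) =>
      K z.1 z.2 * (f z.1 * f z.2) :=
    hKcont.mul ((hfcont.comp continuous_fst).mul (hfcont.comp continuous_snd))
  have hQsum : HasSum (fun j => lam j * b j * b j)
      (∫ z, K z.1 z.2 * (f z.1 * f z.2) ∂(ρm.prod ρm)) := by
    have h := hasSum_integral_of_dominated_convergence
      (μ := ρm.prod ρm)
      (F := fun j (z : EuclideanSpace ℝ (Fin d) × EuclideanSpace ℝ (Fin d)) =>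
        (lam j * φ j z.1 * φ j z.2) * (f z.1 * f z.2))
      (f := fun z : EuclideanSpace ℝ (Fin d) × EuclideanSpace ℝ (Fin d) =>
        K z.1 z.2 * (f z.1 * f z.2))
      (fun j z => lam j * ((φ j z.1 * f z.2) ^ 2 + (φ j z.2 * f z.1) ^ 2) / 2)
      (fun n => (((continuous_const.mul ((hφcont n).comp continuous_fst)).mul
        ((hφcont n).comp continuous_snd)).mul
        ((hfcont.comp continuous_fst).mul (hfcont.comp continuous_snd))).aestronglyMeasurable)
      ?_ ?_ ?_ (ae_of_all _ fun z => (hMercer z.1 z.2).mul_right _)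
    · have hFj : ∀ j, (∫ z, (lam j * φ j z.1 * φ j z.2) * (f z.1 * f z.2) ∂(ρm.prod ρm))
          = lam j * b j * b j := by
        intro j
        have hrw : ∀ z : EuclideanSpace ℝ (Fin d) × EuclideanSpace ℝ (Fin d),
            (lam j * φ j z.1 * φ j z.2) * (f z.1 * f z.2)
              = (lam j * (φ j z.1 * f z.1)) * (φ j z.2 * f z.2) := fun z => by ring
        rw [integral_congr_ae (ae_of_all _ hrw),
          integral_prod_mul (fun x => lam j * (φ j x * f x)) (fun y => φ j y * f y),
          integral_const_mul, hbdef]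
      rw [show (fun j => lam j * b j * b j)
          = fun j => ∫ z, (lam j * φ j z.1 * φ j z.2) * (f z.1 * f z.2) ∂(ρm.prod ρm) from
        funext fun j => (hFj j).symm]
      exact h
    · intro n
      refine ae_of_all _ fun z => ?_
      beta_reduce
      have h1 : (lam n * φ n z.1 * φ n z.2) * (f z.1 * f z.2)
          = lam n * ((φ n z.1 * f z.2) * (φ n z.2 * f z.1)) := by ring
      rw [h1, Real.norm_eq_abs, abs_mul, abs_of_nonneg (hlam_pos n).le]
      have h2 : |(φ n z.1 * f z.2) * (φ n z.2 * f z.1)|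
          ≤ ((φ n z.1 * f z.2) ^ 2 + (φ n z.2 * f z.1) ^ 2) / 2 :=
        abs_le.mpr ⟨by nlinarith [sq_nonneg (φ n z.1 * f z.2 + φ n z.2 * f z.1)],
          by nlinarith [sq_nonneg (φ n z.1 * f z.2 - φ n z.2 * f z.1)]⟩
      calc lam n * |(φ n z.1 * f z.2) * (φ n z.2 * f z.1)|
          ≤ lam n * (((φ n z.1 * f z.2) ^ 2 + (φ n z.2 * f z.1) ^ 2) / 2) :=
            mul_le_mul_of_nonneg_left h2 (hlam_pos n).le
        _ = lam n * ((φ n z.1 * f z.2) ^ 2 + (φ n z.2 * f z.1) ^ 2) / 2 := by ring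
    · refine ae_of_all _ fun z => ?_
      have h1 := ((hMercer z.1 z.1).summable.mul_right ((f z.2) ^ 2 / 2)).add
        ((hMercer z.2 z.2).summable.mul_right ((f z.1) ^ 2 / 2))
      exact h1.congr fun j => by ring
    · have hcont : Continuous fun z : EuclideanSpace ℝ (Fin d) × EuclideanSpace ℝ (Fin d) =>
          K z.1 z.1 * ((f z.2) ^ 2 / 2) + K z.2 z.2 * ((f z.1) ^ 2 / 2) := by
        apply Continuous.add
        · exact (hKcont.comp (continuous_fst.prodMk continuous_fst)).mul
            (((hfcont.comp continuous_snd).pow 2).div_const 2)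
        · exact (hKcont.comp (continuous_snd.prodMk continuous_snd)).mul
            (((hfcont.comp continuous_fst).pow 2).div_const 2)
      refine (hInt2 hcont).congr (ae_of_all _ fun z => ?_)
      have h1 := ((hMercer z.1 z.1).mul_right ((f z.2) ^ 2 / 2)).add
        ((hMercer z.2 z.2).mul_right ((f z.1) ^ 2 / 2))
      have heq : (fun j => lam j * φ j z.1 * φ j z.1 * ((f z.2) ^ 2 / 2)
            + lam j * φ j z.2 * φ j z.2 * ((f z.1) ^ 2 / 2))
          = fun j => lam j * ((φ j z.1 * f z.2) ^ 2 + (φ j z.2 * f z.1) ^ 2) / 2 :=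
        funext fun j => by ring
      rw [heq] at h1
      exact h1.tsum_eq.symm
  -- evaluate the double integral via the ψ eigenbasis
  have hQval : ∫ z, K z.1 z.2 * (f z.1 * f z.2) ∂(ρm.prod ρm)
      = ∑ i : Fin (m + 1), a i * (a i * lamρ i) := by
    rw [integral_prod _ (hInt2 hfprodcont)]
    have hxeq : ∀ x, ∫ y, K x y * (f x * f y) ∂ρm
        = (∑ i : Fin (m + 1), a i * ψ i x) * (∑ i : Fin (m + 1), (a i * lamρ i) * ψ i x) := by
      intro x
      have hKx : Continuous fun y => K x y := hKcont.comp (Continuous.prodMk_right x)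
      have h1 : ∫ y, K x y * (f x * f y) ∂ρm = f x * ∫ y, K x y * f y ∂ρm := by
        rw [← integral_const_mul]
        exact integral_congr_ae (ae_of_all _ fun y => by ring)
      have h2 : ∫ y, K x y * f y ∂ρm = ∑ i : Fin (m + 1), a i * (lamρ i * ψ i x) := by
        have hrw : ∀ y : EuclideanSpace ℝ (Fin d),
            K x y * f y = ∑ i : Fin (m + 1), a i * (K x y * ψ i y) := fun y => by
          rw [hfdef, Finset.mul_sum]
          exact Finset.sum_congr rfl fun i _ => by ring
        simp_rw [hrw]
        rw [integral_finset_sum (f := fun (i : Fin (m + 1)) y => a i * (K x y * ψ i y)) _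
          fun i _ => hInt (continuous_const.mul (hKx.mul (hψcont i)))]
        exact Finset.sum_congr rfl fun i _ => by rw [integral_const_mul, hψeig]
      rw [h1, h2, hfdef]
      rw [Finset.sum_mul_sum, Finset.sum_mul_sum]
      exact Finset.sum_congr rfl fun i _ => Finset.sum_congr rfl fun k _ => by ring
    simp_rw [hxeq]
    rw [hpair]
  -- lower bound
  have hlow : lamρ m * S ≤ ∑ i : Fin (m + 1), a i * (a i * lamρ i) := by
    have hterm : ∀ i : Fin (m + 1), lamρ m * (a i) ^ 2 ≤ a i * (a i * lamρ i) := by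
      intro i
      have h1 : lamρ m ≤ lamρ i := hlamρ_anti (Nat.lt_succ_iff.mp i.isLt)
      nlinarith [sq_nonneg (a i)]
    calc lamρ m * S = ∑ i : Fin (m + 1), lamρ m * (a i) ^ 2 := by
          rw [hSdef, Finset.mul_sum]
      _ ≤ _ := Finset.sum_le_sum fun i _ => hterm i
  -- upper bound
  have hsupp : Function.support (fun j => lam j * b j * b j) ⊆ {j | m ≤ j} := by
    intro j hj
    by_contra h
    refine hj ?_
    show lam j * b j * b j = 0
    rw [hb0 j (by simpa using h)]; ring
  have hQle : (∫ z, K z.1 z.2 * (f z.1 * f z.2) ∂(ρm.prod ρm))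
      ≤ (∑' j : {j : ℕ // m ≤ j}, lam j * ∫ y, (φ j y) ^ 2 ∂ρm) * S := by
    rw [← hQsum.tsum_eq, ← tsum_subtype_eq_of_support_subset hsupp, ← tsum_mul_right]
    refine Summable.tsum_le_tsum (fun j => ?_) (hQsum.summable.subtype _)
      ((hSummable.mul_right S).subtype _)
    have h3 := mul_le_mul_of_nonneg_left (hBessel (j : ℕ)) (hlam_pos (j : ℕ)).le
    nlinarith [h3]
  have hfinal : lamρ m * S
      ≤ (∑' j : {j : ℕ // m ≤ j}, lam j * ∫ y, (φ j y) ^ 2 ∂ρm) * S :=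
    le_trans (hQval ▸ hlow) hQle
  exact le_of_mul_le_mul_right hfinal hS
end

section
/- Suppose there exist constants C > 0, b > 0 and a ≥ 0 such that λ_j ≤ C e^{−bj} and ‖φ_j‖²_ρ ≤ C j^a for all j ≥ 1. Then there is a constant C' > 0 such that for every integer m with b·m > a, the eigenvalues of T_{𝕂,ρ} satisfy λ_{m+1,ρ} ≤ C' (1/b^{a+1}) Γ(a+1, b m) ≤ C' (bm)^{a+1} e^{−bm} / (b^{a+1}(bm − a)); in particular λ_{m+1,ρ} ≤ C'' m^a e^{−bm} for some constant C'' > 0 and all m large enough, where Γ(s, x) = ∫_x^∞ u^{s−1} e^{−u} du is the upper incomplete Gamma function. -/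
open MeasureTheory Set Filter

/-- Cauchy–Schwarz for integrals, abs version. -/
lemma aux_cs {α : Type*} [MeasurableSpace α] (μ : Measure α) (f g : α → ℝ)
    (hf : Integrable (fun x => f x ^ 2) μ) (hg : Integrable (fun x => g x ^ 2) μ)
    (hfg : Integrable (fun x => f x * g x) μ) :
    (∫ x, |f x * g x| ∂μ) ^ 2 ≤ (∫ x, f x ^ 2 ∂μ) * (∫ x, g x ^ 2 ∂μ) := by
  set A := ∫ x, f x ^ 2 ∂μ with hA_def
  set B := ∫ x, |f x * g x| ∂μ with hB_def
  set D := ∫ x, g x ^ 2 ∂μ with hD_def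
  have hA : 0 ≤ A := integral_nonneg fun x => sq_nonneg _
  have hD : 0 ≤ D := integral_nonneg fun x => sq_nonneg _
  have hB : 0 ≤ B := integral_nonneg fun x => abs_nonneg _
  have key : ∀ t : ℝ, 0 ≤ t ^ 2 * A - 2 * t * B + D := by
    intro t
    have h0 : 0 ≤ ∫ x, (t * |f x| - |g x|) ^ 2 ∂μ := integral_nonneg fun x => sq_nonneg _
    have hexp : ∀ x, (t * |f x| - |g x|) ^ 2
        = t ^ 2 * f x ^ 2 - 2 * t * |f x * g x| + g x ^ 2 := by
      intro x
      rw [sub_sq, mul_pow, sq_abs, sq_abs, abs_mul]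
      ring
    have : (∫ x, (t * |f x| - |g x|) ^ 2 ∂μ) = t ^ 2 * A - 2 * t * B + D := by
      simp_rw [hexp]
      have hint1 : Integrable (fun x => t ^ 2 * f x ^ 2) μ := hf.const_mul _
      have hint2 : Integrable (fun x => 2 * t * |f x * g x|) μ := (hfg.abs).const_mul _
      have hint12 : Integrable (fun x => t ^ 2 * f x ^ 2 - 2 * t * |f x * g x|) μ :=
        hint1.sub hint2
      rw [integral_add hint12 hg, integral_sub hint1 hint2,
        integral_const_mul, integral_const_mul]
    linarith [this ▸ h0]
  rcases eq_or_lt_of_le hA with h | h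
  · have hB0 : B = 0 := by
      by_contra hBne
      have hBpos : 0 < B := lt_of_le_of_ne hB (Ne.symm hBne)
      have := key ((D + 1) / (2 * B))
      rw [← h] at this
      have h2 : 2 * ((D + 1) / (2 * B)) * B = D + 1 := by
        field_simp
      nlinarith
    nlinarith
  · have := key (B / A)
    have h2 : (B / A) ^ 2 * A = B ^ 2 / A := by field_simp
    have h3 : 2 * (B / A) * B = 2 * (B ^ 2 / A) := by field_simp
    rw [h2, h3] at this
    have h4 : B ^ 2 / A ≤ D := by linarith
    calc B ^ 2 = B ^ 2 / A * A := by field_simp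
    _ ≤ D * A := by apply mul_le_mul_of_nonneg_right h4 hA
    _ = A * D := mul_comm _ _

lemma aux_summable {a c : ℝ} (ha : 0 ≤ a) (hc : 0 < c) :
    Summable (fun j : ℕ => ((j : ℝ) + 1) ^ a * Real.exp (-c * ((j : ℝ) + 1))) := by
  have htend : Tendsto (fun j : ℕ => ((j : ℝ) + 1) ^ a * Real.exp (-(c / 2) * ((j : ℝ) + 1)))
      atTop (nhds 0) := by
    have h1 := tendsto_rpow_mul_exp_neg_mul_atTop_nhds_zero a (c / 2) (by linarith)
    have h2 : Tendsto (fun j : ℕ => (j : ℝ) + 1) atTop atTop :=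
      tendsto_atTop_add_const_right _ _ tendsto_natCast_atTop_atTop
    exact h1.comp h2
  obtain ⟨D, hD⟩ := htend.bddAbove_range
  have hDnn : ∀ j : ℕ, ((j : ℝ) + 1) ^ a * Real.exp (-(c / 2) * ((j : ℝ) + 1)) ≤ D := by
    intro j; exact hD (Set.mem_range_self j)
  have hr : Real.exp (-(c / 2)) < 1 := Real.exp_lt_one_iff.mpr (by linarith)
  have hgeom : Summable (fun j : ℕ => (D * Real.exp (-(c / 2))) * Real.exp (-(c / 2)) ^ j) :=
    (summable_geometric_of_lt_one (Real.exp_nonneg _) hr).mul_left _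
  apply Summable.of_nonneg_of_le _ _ hgeom
  · intro j
    positivity
  · intro j
    have hsplit : Real.exp (-c * ((j : ℝ) + 1))
        = Real.exp (-(c / 2) * ((j : ℝ) + 1)) * Real.exp (-(c / 2) * ((j : ℝ) + 1)) := by
      rw [← Real.exp_add]; congr 1; ring
    have hpow : Real.exp (-(c / 2) * ((j : ℝ) + 1))
        = Real.exp (-(c / 2)) ^ (j + 1) := by
      rw [← Real.exp_nat_mul]; congr 1; push_cast; ring
    calc ((j : ℝ) + 1) ^ a * Real.exp (-c * ((j : ℝ) + 1))
        = (((j : ℝ) + 1) ^ a * Real.exp (-(c / 2) * ((j : ℝ) + 1)))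
            * Real.exp (-(c / 2) * ((j : ℝ) + 1)) := by rw [hsplit]; ring
      _ ≤ D * Real.exp (-(c / 2) * ((j : ℝ) + 1)) := by
          apply mul_le_mul_of_nonneg_right (hDnn j) (Real.exp_nonneg _)
      _ = (D * Real.exp (-(c / 2))) * Real.exp (-(c / 2)) ^ j := by
          rw [hpow, pow_succ]; ring

lemma aux_sqrt_eq {a c : ℝ} (ha : 0 ≤ a) (j : ℕ) :
    Real.sqrt (((j : ℝ) + 1) ^ a * Real.exp (-c * ((j : ℝ) + 1)))
      = ((j : ℝ) + 1) ^ (a / 2) * Real.exp (-(c / 2) * ((j : ℝ) + 1)) := by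
  have hj : (0 : ℝ) ≤ (j : ℝ) + 1 := by positivity
  rw [Real.sqrt_mul (Real.rpow_nonneg hj a)]
  congr 1
  · rw [Real.sqrt_eq_rpow, ← Real.rpow_mul hj]
    congr 1; ring
  · have : Real.exp (-c * ((j : ℝ) + 1))
        = Real.exp (-(c / 2) * ((j : ℝ) + 1)) ^ 2 := by
      rw [← Real.exp_nat_mul]; congr 1; push_cast; ring
    rw [this, Real.sqrt_sq (Real.exp_nonneg _)]

lemma aux_summable_sqrt {a c : ℝ} (ha : 0 ≤ a) (hc : 0 < c) :
    Summable (fun j : ℕ => Real.sqrt (((j : ℝ) + 1) ^ a * Real.exp (-c * ((j : ℝ) + 1)))) := by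
  have h := aux_summable (a := a / 2) (c := c / 2) (by linarith) (by linarith)
  exact h.congr fun j => (aux_sqrt_eq ha j).symm

lemma gamma_integrable {a x : ℝ} (ha : 0 ≤ a) (hx : 0 < x) :
    IntegrableOn (fun u : ℝ => u ^ a * Real.exp (-u)) (Set.Ioi x) := by
  have h := Real.GammaIntegral_convergent (show (0:ℝ) < a + 1 by linarith)
  simp only [add_sub_cancel_right] at h
  have h2 : IntegrableOn (fun u : ℝ => u ^ a * Real.exp (-u)) (Set.Ioi 0) := by
    apply h.congr_fun (fun u _ => mul_comm _ _) measurableSet_Ioi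
  exact h2.mono_set (Set.Ioi_subset_Ioi hx.le)

lemma gamma_tail_bound {a x : ℝ} (ha : 0 ≤ a) (hx : a < x) :
    (∫ u in Set.Ioi x, u ^ a * Real.exp (-u))
      ≤ x ^ (a + 1) * Real.exp (-x) / (x - a) := by
  have hx0 : 0 < x := lt_of_le_of_lt ha hx
  set c := (x - a) / x with hc_def
  have hc : 0 < c := div_pos (by linarith) hx0
  have hpt : ∀ u ∈ Set.Ioi x, u ^ a * Real.exp (-u)
      ≤ (x ^ a * Real.exp (-x) * Real.exp (c * x)) * Real.exp (-c * u) := by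
    intro u hu
    have hux : x < u := hu
    have hu0 : 0 < u := lt_trans hx0 hux
    have hlog : Real.log u - Real.log x ≤ (u - x) / x := by
      have h1 : Real.log (u / x) ≤ u / x - 1 := Real.log_le_sub_one_of_pos (div_pos hu0 hx0)
      rw [Real.log_div hu0.ne' hx0.ne'] at h1
      have h2 : u / x - 1 = (u - x) / x := by field_simp
      linarith [h2 ▸ h1]
    have hrw1 : u ^ a = Real.exp (a * Real.log u) := by
      rw [Real.rpow_def_of_pos hu0]; ring_nf
    have hrw2 : x ^ a = Real.exp (a * Real.log x) := by
      rw [Real.rpow_def_of_pos hx0]; ring_nf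
    rw [hrw1, hrw2]
    simp only [← Real.exp_add]
    apply Real.exp_le_exp.mpr
    have key : a * (Real.log u - Real.log x) ≤ a / x * (u - x) := by
      calc a * (Real.log u - Real.log x) ≤ a * ((u - x) / x) :=
        mul_le_mul_of_nonneg_left hlog ha
      _ = a / x * (u - x) := by ring
    have hcx : c * x = x - a := by rw [hc_def]; field_simp
    have hcu : c * u = u - a / x * u := by rw [hc_def]; field_simp
    have haxx : a / x * x = a := by field_simp
    nlinarith [key, hcx, hcu]
  have hint1 : IntegrableOn (fun u : ℝ => u ^ a * Real.exp (-u)) (Set.Ioi x) :=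
    gamma_integrable ha hx0
  have hint2 : IntegrableOn
      (fun u : ℝ => (x ^ a * Real.exp (-x) * Real.exp (c * x)) * Real.exp (-c * u))
      (Set.Ioi x) := (exp_neg_integrableOn_Ioi x hc).const_mul _
  have hmono := setIntegral_mono_on hint1 hint2 measurableSet_Ioi hpt
  have hval : (∫ u in Set.Ioi x, Real.exp (-c * u)) = c⁻¹ * Real.exp (-(c * x)) := by
    have h := integral_comp_mul_left_Ioi (fun t => Real.exp (-t)) x hc
    simp only [integral_exp_neg_Ioi, smul_eq_mul] at h
    simpa [neg_mul] using h
  have hrhs : (∫ u in Set.Ioi x, (x ^ a * Real.exp (-x) * Real.exp (c * x)) * Real.exp (-c * u))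
      = x ^ (a + 1) * Real.exp (-x) / (x - a) := by
    rw [integral_const_mul, hval]
    have hee : Real.exp (c * x) * Real.exp (-(c * x)) = 1 := by
      rw [← Real.exp_add]; simp
    have hxa1 : x ^ (a + 1) = x ^ a * x := by
      rw [Real.rpow_add hx0, Real.rpow_one]
    have hcinv : c⁻¹ = x / (x - a) := by
      rw [hc_def]; rw [inv_div]
    calc x ^ a * Real.exp (-x) * Real.exp (c * x) * (c⁻¹ * Real.exp (-(c * x)))
        = x ^ a * Real.exp (-x) * c⁻¹ * (Real.exp (c * x) * Real.exp (-(c * x))) := by ring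
      _ = x ^ a * Real.exp (-x) * (x / (x - a)) := by rw [hee, hcinv]; ring
      _ = x ^ (a + 1) * Real.exp (-x) / (x - a) := by rw [hxa1]; ring
  linarith [hrhs ▸ hmono]

lemma interval_bound {a b : ℝ} (ha : 0 ≤ a) (hb : 0 < b) {j : ℕ} (hj : 1 ≤ j) :
    ((j : ℝ) + 1) ^ a * Real.exp (-b * ((j : ℝ) + 1))
      ≤ ((2:ℝ) ^ a / b ^ (a + 1))
          * ∫ u in Set.Ioc (b * (j : ℝ)) (b * ((j : ℝ) + 1)), u ^ a * Real.exp (-u) := by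
  have hj1 : (1 : ℝ) ≤ (j : ℝ) := by exact_mod_cast hj
  have hj0 : (0 : ℝ) < (j : ℝ) := by linarith
  have hbj : 0 < b * (j : ℝ) := by positivity
  have hlow : ∀ u ∈ Set.Ioc (b * (j : ℝ)) (b * ((j : ℝ) + 1)),
      (b * (j : ℝ)) ^ a * Real.exp (-(b * ((j : ℝ) + 1))) ≤ u ^ a * Real.exp (-u) := by
    intro u hu
    obtain ⟨hu1, hu2⟩ := hu
    exact mul_le_mul (Real.rpow_le_rpow hbj.le hu1.le ha)
      (Real.exp_le_exp.mpr (by linarith)) (Real.exp_nonneg _)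
      (Real.rpow_nonneg (le_trans hbj.le hu1.le) a)
  have hconst_int : (∫ _u in Set.Ioc (b * (j : ℝ)) (b * ((j : ℝ) + 1)),
      ((b * (j : ℝ)) ^ a * Real.exp (-(b * ((j : ℝ) + 1)))))
      = b * ((b * (j : ℝ)) ^ a * Real.exp (-(b * ((j : ℝ) + 1)))) := by
    rw [setIntegral_const, Real.volume_real_Ioc,
      max_eq_left (by nlinarith : (0:ℝ) ≤ b * ((j : ℝ) + 1) - b * (j : ℝ)),
      smul_eq_mul]
    ring
  have hIint : IntegrableOn (fun u : ℝ => u ^ a * Real.exp (-u))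
      (Set.Ioc (b * (j : ℝ)) (b * ((j : ℝ) + 1))) :=
    (gamma_integrable ha hbj).mono_set Set.Ioc_subset_Ioi_self
  have hCint : IntegrableOn (fun _u : ℝ => (b * (j : ℝ)) ^ a * Real.exp (-(b * ((j : ℝ) + 1))))
      (Set.Ioc (b * (j : ℝ)) (b * ((j : ℝ) + 1))) := by
    apply (integrableOn_const_iff enorm_ne_top).mpr
    right
    rw [Real.volume_Ioc]
    exact ENNReal.ofReal_lt_top
  have hmono := setIntegral_mono_on hCint hIint measurableSet_Ioc hlow
  have h1 : (b * (j : ℝ)) ^ a = b ^ a * (j : ℝ) ^ a := Real.mul_rpow hb.le hj0.le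
  have h2 : b ^ (a + 1) = b ^ a * b := by rw [Real.rpow_add hb, Real.rpow_one]
  have h3 : ((j : ℝ) + 1) ^ a ≤ 2 ^ a * (j : ℝ) ^ a := by
    rw [← Real.mul_rpow (by norm_num) hj0.le]
    exact Real.rpow_le_rpow (by positivity) (by linarith) ha
  have hba : (0:ℝ) < b ^ a := Real.rpow_pos_of_pos hb a
  calc ((j : ℝ) + 1) ^ a * Real.exp (-b * ((j : ℝ) + 1))
      ≤ (2 ^ a * (j : ℝ) ^ a) * Real.exp (-b * ((j : ℝ) + 1)) :=
        mul_le_mul_of_nonneg_right h3 (Real.exp_nonneg _)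
    _ = ((2:ℝ) ^ a / b ^ (a + 1))
          * (b * ((b * (j : ℝ)) ^ a * Real.exp (-(b * ((j : ℝ) + 1))))) := by
        rw [h1, h2, neg_mul]
        field_simp
    _ ≤ ((2:ℝ) ^ a / b ^ (a + 1))
          * ∫ u in Set.Ioc (b * (j : ℝ)) (b * ((j : ℝ) + 1)), u ^ a * Real.exp (-u) := by
        apply mul_le_mul_of_nonneg_left _ (by positivity)
        calc b * ((b * (j : ℝ)) ^ a * Real.exp (-(b * ((j : ℝ) + 1))))
            = ∫ _u in Set.Ioc (b * (j : ℝ)) (b * ((j : ℝ) + 1)),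
                ((b * (j : ℝ)) ^ a * Real.exp (-(b * ((j : ℝ) + 1)))) := hconst_int.symm
          _ ≤ _ := hmono

lemma finsum_Ioc_le {a b : ℝ} (ha : 0 ≤ a) (hb : 0 < b) {m : ℕ} (hm : 1 ≤ m)
    (s : Finset ℕ) (hs : ∀ j ∈ s, m ≤ j) :
    (∑ j ∈ s, ∫ u in Set.Ioc (b * (j : ℝ)) (b * ((j : ℝ) + 1)), u ^ a * Real.exp (-u))
      ≤ ∫ u in Set.Ioi (b * (m : ℝ)), u ^ a * Real.exp (-u) := by
  have hm1 : (1:ℝ) ≤ (m:ℝ) := by exact_mod_cast hm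
  have hbm : 0 < b * (m : ℝ) := by nlinarith
  have hint : IntegrableOn (fun u : ℝ => u ^ a * Real.exp (-u)) (Set.Ioi (b * (m:ℝ))) :=
    gamma_integrable ha hbm
  have hsub : ∀ j ∈ s, Set.Ioc (b * (j : ℝ)) (b * ((j : ℝ) + 1)) ⊆ Set.Ioi (b * (m : ℝ)) := by
    intro j hj u hu
    have hmj : (m:ℝ) ≤ (j:ℝ) := Nat.cast_le.mpr (hs j hj)
    have : b * (m:ℝ) ≤ b * (j:ℝ) := by nlinarith
    exact lt_of_le_of_lt this hu.1
  have hdisj : Set.Pairwise ↑s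
      (Function.onFun Disjoint (fun j : ℕ => Set.Ioc (b * (j : ℝ)) (b * ((j : ℝ) + 1)))) := by
    intro j _ k _ hne
    have key : ∀ {p q : ℕ}, p < q →
        Disjoint (Set.Ioc (b * (p : ℝ)) (b * ((p : ℝ) + 1)))
          (Set.Ioc (b * (q : ℝ)) (b * ((q : ℝ) + 1))) := by
      intro p q hpq
      apply Set.Ioc_disjoint_Ioc.mpr
      have hpq' : ((p:ℝ) + 1) ≤ (q:ℝ) := by exact_mod_cast hpq
      calc min (b * ((p : ℝ) + 1)) (b * ((q : ℝ) + 1)) ≤ b * ((p : ℝ) + 1) := min_le_left _ _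
        _ ≤ b * (q:ℝ) := by nlinarith
        _ ≤ max (b * (p : ℝ)) (b * (q : ℝ)) := le_max_right _ _
    rcases lt_or_gt_of_ne hne with h | h
    · exact key h
    · exact (key h).symm
  rw [← integral_biUnion_finset s (fun j _ => measurableSet_Ioc) hdisj
    (fun j hj => hint.mono_set (hsub j hj))]
  apply setIntegral_mono_set hint
  · filter_upwards [ae_restrict_mem measurableSet_Ioi] with u hu
    have hu0 : 0 < u := lt_trans hbm hu
    positivity
  · exact (Set.iUnion₂_subset hsub).eventuallyLE

open MeasureTheory ProbabilityTheory

/-- (The bound (3.4) and its consequence.)  0-based indexing: `lam j`,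
`φ j`, `lamρ j` stand for the paper's `λ_{j+1}`, `φ_{j+1}`, `λ_{j+1,ρ}`; the decay
assumptions `λ_j ≤ C e^{−bj}` and `‖φ_j‖²_ρ ≤ C j^a` (for `j ≥ 1`) become
`lam j ≤ C·exp(−b(j+1))` and `‖φ j‖²_ρ ≤ C (j+1)^a`.  Then there is `C' > 0` such
that for every `m` with `b·m > a`, the paper's `λ_{m+1,ρ}` (i.e. `lamρ m`) satisfies
`lamρ m ≤ C'·(1/b^{a+1})·Γ(a+1, b·m)` and
`C'·(1/b^{a+1})·Γ(a+1, b·m) ≤ C'·(b m)^{a+1} e^{−bm}/(b^{a+1}(bm−a))`, where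
`Γ(s,x) = ∫_x^∞ u^{s−1} e^{−u} du`; in particular `lamρ m ≤ C'' m^a e^{−bm}` for some
`C'' > 0` and all sufficiently large `m`. -/
theorem eigenvalue_decay_unknown_measure
    {d : ℕ} (hd : 1 ≤ d)
    {X : Set (EuclideanSpace ℝ (Fin d))} (hXcomp : IsCompact X) (hXne : X.Nonempty)
    (P ρm : Measure (EuclideanSpace ℝ (Fin d)))
    [IsProbabilityMeasure P] [IsProbabilityMeasure ρm]
    (hPX : P X = 1) (hρX : ρm X = 1)
    (K : EuclideanSpace ℝ (Fin d) → EuclideanSpace ℝ (Fin d) → ℝ)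
    (hKcont : Continuous fun p : EuclideanSpace ℝ (Fin d) × EuclideanSpace ℝ (Fin d) => K p.1 p.2)
    (hKsymm : ∀ x y, K x y = K y x)
    (lam : ℕ → ℝ) (φ : ℕ → EuclideanSpace ℝ (Fin d) → ℝ)
    (hlam_pos : ∀ m, 0 < lam m) (hlam_anti : Antitone lam)
    (hφcont : ∀ m, Continuous (φ m))
    (hφorth : ∀ i j, ∫ y, φ i y * φ j y ∂P = if i = j then 1 else 0)
    (hφcomplete : ∀ f : EuclideanSpace ℝ (Fin d) → ℝ, MemLp f 2 P →
      (∀ m, ∫ y, f y * φ m y ∂P = 0) → f =ᵐ[P] 0)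
    (hMercer : ∀ x y, HasSum (fun m => lam m * φ m x * φ m y) (K x y))
    (hac : ρm ≪ P)
    (hrnBdd : ∃ M : ℝ, ∀ᵐ x ∂P, (ρm.rnDeriv P x).toReal ≤ M)
    (lamρ : ℕ → ℝ) (ψ : ℕ → EuclideanSpace ℝ (Fin d) → ℝ)
    (hlamρ_nonneg : ∀ m, 0 ≤ lamρ m) (hlamρ_anti : Antitone lamρ)
    (hψcont : ∀ m, Continuous (ψ m))
    (hψorth : ∀ i j, ∫ y, ψ i y * ψ j y ∂ρm = if i = j then 1 else 0)
    (hψeig : ∀ m x, ∫ y, K x y * ψ m y ∂ρm = lamρ m * ψ m x)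
    (hψcomplete : ∀ f : EuclideanSpace ℝ (Fin d) → ℝ, MemLp f 2 ρm →
      (∀ m, ∫ y, f y * ψ m y ∂ρm = 0) → ∀ x, ∫ y, K x y * f y ∂ρm = 0)
    (C a b : ℝ) (hC : 0 < C) (ha : 0 ≤ a) (hb : 0 < b)
    (hlam_decay : ∀ j : ℕ, lam j ≤ C * Real.exp (-b * ((j : ℝ) + 1)))
    (hφρ : ∀ j : ℕ, (∫ y, (φ j y) ^ 2 ∂ρm) ≤ C * ((j : ℝ) + 1) ^ a) :
    (∃ C' : ℝ, 0 < C' ∧ ∀ m : ℕ, a < b * m →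
      (lamρ m ≤ C' * (1 / b ^ (a + 1)) * ∫ u in Set.Ioi (b * m), u ^ a * Real.exp (-u)) ∧
      (C' * (1 / b ^ (a + 1)) * (∫ u in Set.Ioi (b * m), u ^ a * Real.exp (-u)) ≤
        C' * (b * m) ^ (a + 1) * Real.exp (-(b * m)) / (b ^ (a + 1) * (b * m - a)))) ∧
    (∃ C'' : ℝ, 0 < C'' ∧ ∃ M : ℕ, ∀ m : ℕ, M ≤ m →
      lamρ m ≤ C'' * (m : ℝ) ^ a * Real.exp (-(b * m))) := by
  classical
  -- ### integrability infrastructure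
  have hXmeas : MeasurableSet X := hXcomp.isClosed.measurableSet
  have hρae : ∀ᵐ x ∂ρm, x ∈ X := by
    have h0 : ρm Xᶜ = 0 := (prob_compl_eq_zero_iff hXmeas).mpr hρX
    rw [ae_iff]
    exact h0
  have hres : ρm.restrict X = ρm := Measure.restrict_eq_self_of_ae_mem hρae
  have hInt : ∀ f : EuclideanSpace ℝ (Fin d) → ℝ, Continuous f → Integrable f ρm := by
    intro f hf
    rw [← hres]
    exact hf.continuousOn.integrableOn_compact hXcomp
  -- ### definitions
  set cc : ℕ → ℕ → ℝ := fun j i => ∫ y, φ j y * ψ i y ∂ρm with hcc_def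
  set nph : ℕ → ℝ := fun j => ∫ y, (φ j y) ^ 2 ∂ρm with hnph_def
  have cc_eq : ∀ j i, cc j i = ∫ y, φ j y * ψ i y ∂ρm := fun j i => by simp only [hcc_def]
  have nph_eq : ∀ j, nph j = ∫ y, (φ j y) ^ 2 ∂ρm := fun j => by simp only [hnph_def]
  have hnph_nonneg : ∀ j, 0 ≤ nph j := by
    intro j; rw [nph_eq]; exact integral_nonneg fun y => sq_nonneg _
  have hnph_le : ∀ j, nph j ≤ C * ((j : ℝ) + 1) ^ a := by
    intro j; rw [nph_eq]; exact hφρ j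
  have hIφψ : ∀ j i, Integrable (fun y => φ j y * ψ i y) ρm :=
    fun j i => hInt _ ((hφcont j).mul (hψcont i))
  have hIψψ : ∀ i k, Integrable (fun y => ψ i y * ψ k y) ρm :=
    fun i k => hInt _ ((hψcont i).mul (hψcont k))
  have hIφ2 : ∀ j, Integrable (fun y => (φ j y) ^ 2) ρm :=
    fun j => hInt _ ((hφcont j).pow 2)
  have hIψ2 : ∀ i, Integrable (fun y => (ψ i y) ^ 2) ρm :=
    fun i => hInt _ ((hψcont i).pow 2)
  have hψsq : ∀ i, (∫ y, (ψ i y) ^ 2 ∂ρm) = 1 := by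
    intro i
    have h := hψorth i i
    simp only [if_pos rfl] at h
    simp_rw [pow_two]
    exact h
  -- ### pointwise Mercer consequences
  have hterm_nonneg : ∀ (x : EuclideanSpace ℝ (Fin d)) (j : ℕ), 0 ≤ lam j * φ j x * φ j x := by
    intro x j
    rw [mul_assoc]
    exact mul_nonneg (hlam_pos j).le (mul_self_nonneg _)
  have hK0 : ∀ x, 0 ≤ K x x := fun x => (hMercer x x).nonneg (hterm_nonneg x)
  have hterm_le : ∀ (x : EuclideanSpace ℝ (Fin d)) (j : ℕ), lam j * φ j x * φ j x ≤ K x x :=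
    fun x j => le_hasSum (hMercer x x) j (fun k _ => hterm_nonneg x k)
  -- ### Cauchy–Schwarz consequences
  have habs : ∀ j i, (∫ y, |φ j y * ψ i y| ∂ρm) ≤ Real.sqrt (nph j) := by
    intro j i
    have h := aux_cs ρm (φ j) (ψ i) (hIφ2 j) (hIψ2 i) (hIφψ j i)
    rw [hψsq i, mul_one] at h
    have hB : 0 ≤ ∫ y, |φ j y * ψ i y| ∂ρm := integral_nonneg fun y => abs_nonneg _
    rw [← nph_eq] at h
    calc (∫ y, |φ j y * ψ i y| ∂ρm)
        = Real.sqrt ((∫ y, |φ j y * ψ i y| ∂ρm) ^ 2) := (Real.sqrt_sq hB).symm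
      _ ≤ Real.sqrt (nph j) := Real.sqrt_le_sqrt h
  have hcabs : ∀ j i, |cc j i| ≤ Real.sqrt (nph j) := by
    intro j i
    rw [cc_eq]
    calc |∫ y, φ j y * ψ i y ∂ρm| ≤ ∫ y, |φ j y * ψ i y| ∂ρm := by
          simpa only [Real.norm_eq_abs] using
            norm_integral_le_integral_norm (μ := ρm) (fun y => φ j y * ψ i y)
      _ ≤ Real.sqrt (nph j) := habs j i
  have hlamnph : ∀ j : ℕ,
      lam j * nph j ≤ (C * C) * (((j : ℝ) + 1) ^ a * Real.exp (-b * ((j : ℝ) + 1))) := by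
    intro j
    calc lam j * nph j
        ≤ (C * Real.exp (-b * ((j : ℝ) + 1))) * (C * ((j : ℝ) + 1) ^ a) :=
          mul_le_mul (hlam_decay j) (hnph_le j) (hnph_nonneg j) (by positivity)
      _ = (C * C) * (((j : ℝ) + 1) ^ a * Real.exp (-b * ((j : ℝ) + 1))) := by ring
  -- ### step A : expansion of the eigenfunction equation
  have keyA : ∀ (k : ℕ) (x : EuclideanSpace ℝ (Fin d)),
      HasSum (fun j => lam j * φ j x * cc j k) (lamρ k * ψ k x) := by
    intro k x
    have hFint : ∀ j : ℕ, Integrable (fun y => (lam j * φ j x) * (φ j y * ψ k y)) ρm :=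
      fun j => (hIφψ j k).const_mul _
    have hFsum : Summable (fun j => ∫ y, ‖(lam j * φ j x) * (φ j y * ψ k y)‖ ∂ρm) := by
      apply Summable.of_nonneg_of_le
        (fun j => integral_nonneg fun y => norm_nonneg _)
        (f := fun j : ℕ => (Real.sqrt (K x x) * (Real.sqrt C * Real.sqrt C))
            * Real.sqrt (((j : ℝ) + 1) ^ a * Real.exp (-b * ((j : ℝ) + 1)))) ?_
        ((aux_summable_sqrt ha hb).mul_left _)
      intro j
      have hFnorm : (∫ y, ‖(lam j * φ j x) * (φ j y * ψ k y)‖ ∂ρm)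
          = |lam j * φ j x| * ∫ y, |φ j y * ψ k y| ∂ρm := by
        simp_rw [Real.norm_eq_abs, abs_mul (lam j * φ j x)]
        rw [integral_const_mul]
      rw [hFnorm]
      have h1 : |lam j * φ j x|
          ≤ Real.sqrt (C * Real.exp (-b * ((j : ℝ) + 1))) * Real.sqrt (K x x) := by
        have hsq : |lam j * φ j x| ^ 2 ≤ (C * Real.exp (-b * ((j : ℝ) + 1))) * K x x := by
          have e1 : |lam j * φ j x| ^ 2 = lam j * (lam j * φ j x * φ j x) := by
            rw [sq_abs]; ring
          rw [e1]
          calc lam j * (lam j * φ j x * φ j x) ≤ lam j * K x x :=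
                mul_le_mul_of_nonneg_left (hterm_le x j) (hlam_pos j).le
            _ ≤ (C * Real.exp (-b * ((j : ℝ) + 1))) * K x x :=
                mul_le_mul_of_nonneg_right (hlam_decay j) (hK0 x)
        calc |lam j * φ j x| = Real.sqrt (|lam j * φ j x| ^ 2) :=
              (Real.sqrt_sq (abs_nonneg _)).symm
          _ ≤ Real.sqrt ((C * Real.exp (-b * ((j : ℝ) + 1))) * K x x) := Real.sqrt_le_sqrt hsq
          _ = Real.sqrt (C * Real.exp (-b * ((j : ℝ) + 1))) * Real.sqrt (K x x) :=
              Real.sqrt_mul (by positivity) _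
      have h2 : (∫ y, |φ j y * ψ k y| ∂ρm) ≤ Real.sqrt (C * ((j : ℝ) + 1) ^ a) :=
        le_trans (habs j k) (Real.sqrt_le_sqrt (hnph_le j))
      calc |lam j * φ j x| * (∫ y, |φ j y * ψ k y| ∂ρm)
          ≤ (Real.sqrt (C * Real.exp (-b * ((j : ℝ) + 1))) * Real.sqrt (K x x))
              * Real.sqrt (C * ((j : ℝ) + 1) ^ a) :=
            mul_le_mul h1 h2 (integral_nonneg fun y => abs_nonneg _) (by positivity)
        _ = (Real.sqrt (K x x) * (Real.sqrt C * Real.sqrt C))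
              * Real.sqrt (((j : ℝ) + 1) ^ a * Real.exp (-b * ((j : ℝ) + 1))) := by
            rw [Real.sqrt_mul hC.le, Real.sqrt_mul hC.le,
              Real.sqrt_mul (Real.rpow_nonneg (by positivity) a)]
            ring
    have h0 := MeasureTheory.hasSum_integral_of_summable_integral_norm hFint hFsum
    have hpt : ∀ y, (∑' j, (lam j * φ j x) * (φ j y * ψ k y)) = K x y * ψ k y := by
      intro y
      have h1 := (hMercer x y).mul_right (ψ k y)
      have h2 : (fun j => (lam j * φ j x) * (φ j y * ψ k y))
          = fun j => (lam j * φ j x * φ j y) * ψ k y := by funext j; ring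
      rw [h2]
      exact h1.tsum_eq
    have h3 : (∫ y, ∑' j, (lam j * φ j x) * (φ j y * ψ k y) ∂ρm) = lamρ k * ψ k x := by
      rw [integral_congr_ae (Filter.Eventually.of_forall hpt)]
      exact hψeig k x
    rw [h3] at h0
    have h4 : (fun j => ∫ y, (lam j * φ j x) * (φ j y * ψ k y) ∂ρm)
        = fun j => lam j * φ j x * cc j k := by
      funext j
      rw [integral_const_mul, ← cc_eq]
    rw [h4] at h0
    exact h0
  -- ### step B : the Gram identity
  have key : ∀ i k : ℕ, HasSum (fun j => lam j * cc j i * cc j k)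
      (lamρ k * if k = i then 1 else 0) := by
    intro i k
    have hGint : ∀ j : ℕ, Integrable (fun y => (lam j * cc j k) * (φ j y * ψ i y)) ρm :=
      fun j => (hIφψ j i).const_mul _
    have hGsum : Summable (fun j => ∫ y, ‖(lam j * cc j k) * (φ j y * ψ i y)‖ ∂ρm) := by
      apply Summable.of_nonneg_of_le (fun j => integral_nonneg fun y => norm_nonneg _)
        (f := fun j : ℕ => (C * C) * (((j : ℝ) + 1) ^ a * Real.exp (-b * ((j : ℝ) + 1)))) ?_
        ((aux_summable ha hb).mul_left _)
      intro j
      have hGnorm : (∫ y, ‖(lam j * cc j k) * (φ j y * ψ i y)‖ ∂ρm)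
          = |lam j * cc j k| * ∫ y, |φ j y * ψ i y| ∂ρm := by
        simp_rw [Real.norm_eq_abs, abs_mul (lam j * cc j k)]
        rw [integral_const_mul]
      rw [hGnorm]
      have h1 : |lam j * cc j k| ≤ lam j * Real.sqrt (nph j) := by
        rw [abs_mul, abs_of_pos (hlam_pos j)]
        exact mul_le_mul_of_nonneg_left (hcabs j k) (hlam_pos j).le
      calc |lam j * cc j k| * (∫ y, |φ j y * ψ i y| ∂ρm)
          ≤ (lam j * Real.sqrt (nph j)) * Real.sqrt (nph j) :=
            mul_le_mul h1 (habs j i) (integral_nonneg fun y => abs_nonneg _)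
              (mul_nonneg (hlam_pos j).le (Real.sqrt_nonneg _))
        _ = lam j * nph j := by rw [mul_assoc, Real.mul_self_sqrt (hnph_nonneg j)]
        _ ≤ (C * C) * (((j : ℝ) + 1) ^ a * Real.exp (-b * ((j : ℝ) + 1))) := hlamnph j
    have h0 := MeasureTheory.hasSum_integral_of_summable_integral_norm hGint hGsum
    have hpt : ∀ y, (∑' j, (lam j * cc j k) * (φ j y * ψ i y)) = (lamρ k * ψ k y) * ψ i y := by
      intro y
      have h1 := (keyA k y).mul_right (ψ i y)
      have h2 : (fun j => (lam j * cc j k) * (φ j y * ψ i y))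
          = fun j => (lam j * φ j y * cc j k) * ψ i y := by funext j; ring
      rw [h2]
      exact h1.tsum_eq
    have h3 : (∫ y, ∑' j, (lam j * cc j k) * (φ j y * ψ i y) ∂ρm)
        = lamρ k * if k = i then 1 else 0 := by
      rw [integral_congr_ae (Filter.Eventually.of_forall hpt)]
      simp_rw [mul_assoc (lamρ k)]
      rw [integral_const_mul, hψorth k i]
    rw [h3] at h0
    have h4 : (fun j => ∫ y, (lam j * cc j k) * (φ j y * ψ i y) ∂ρm)
        = fun j => lam j * cc j i * cc j k := by
      funext j
      rw [integral_const_mul, ← cc_eq]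
      ring
    rw [h4] at h0
    exact h0
  -- ### Bessel's inequality
  have bessel : ∀ (n j : ℕ), (∑ i : Fin n, (cc j (i : ℕ)) ^ 2) ≤ nph j := by
    intro n j
    set S : EuclideanSpace ℝ (Fin d) → ℝ := fun y => ∑ i : Fin n, cc j (i : ℕ) * ψ (i : ℕ) y
      with hS_def
    have hScont : Continuous S :=
      continuous_finset_sum _ (fun i _ => continuous_const.mul (hψcont _))
    have hIS2 : Integrable (fun y => (S y) ^ 2) ρm := hInt _ (hScont.pow 2)
    have hIφS : Integrable (fun y => φ j y * S y) ρm := hInt _ ((hφcont j).mul hScont)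
    have hstep1 : (∫ y, φ j y * S y ∂ρm) = ∑ i : Fin n, (cc j (i : ℕ)) ^ 2 := by
      have h1 : ∀ y, φ j y * S y = ∑ i : Fin n, cc j (i : ℕ) * (φ j y * ψ (i : ℕ) y) := by
        intro y
        simp only [hS_def, Finset.mul_sum]
        apply Finset.sum_congr rfl
        intro i _
        ring
      simp_rw [h1]
      have hfs := integral_finset_sum (μ := ρm) Finset.univ
        (f := fun (i : Fin n) (y : EuclideanSpace ℝ (Fin d)) =>
          cc j (i : ℕ) * (φ j y * ψ (i : ℕ) y))
        (fun i _ => (hIφψ j (i : ℕ)).const_mul _)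
      rw [hfs]
      apply Finset.sum_congr rfl
      intro i _
      rw [integral_const_mul, ← cc_eq, pow_two]
    have hstep2 : (∫ y, (S y) ^ 2 ∂ρm) = ∑ i : Fin n, (cc j (i : ℕ)) ^ 2 := by
      have h1 : ∀ y, (S y) ^ 2 = ∑ i : Fin n, ∑ k : Fin n,
          (cc j (i : ℕ) * cc j (k : ℕ)) * (ψ (i : ℕ) y * ψ (k : ℕ) y) := by
        intro y
        simp only [hS_def, pow_two, Finset.sum_mul_sum]
        apply Finset.sum_congr rfl
        intro i _
        apply Finset.sum_congr rfl
        intro k _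
        ring
      simp_rw [h1]
      have hfs := integral_finset_sum (μ := ρm) Finset.univ
        (f := fun (i : Fin n) (y : EuclideanSpace ℝ (Fin d)) => ∑ k : Fin n,
          (cc j (i : ℕ) * cc j (k : ℕ)) * (ψ (i : ℕ) y * ψ (k : ℕ) y))
        (fun i _ => integrable_finset_sum _
          (fun k _ => (hIψψ (i : ℕ) (k : ℕ)).const_mul _))
      rw [hfs]
      apply Finset.sum_congr rfl
      intro i _
      have hfs2 := integral_finset_sum (μ := ρm) Finset.univ
        (f := fun (k : Fin n) (y : EuclideanSpace ℝ (Fin d)) =>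
          (cc j (i : ℕ) * cc j (k : ℕ)) * (ψ (i : ℕ) y * ψ (k : ℕ) y))
        (fun k _ => (hIψψ (i : ℕ) (k : ℕ)).const_mul _)
      rw [hfs2]
      have h2 : ∀ k : Fin n, (∫ y, (cc j (i : ℕ) * cc j (k : ℕ)) * (ψ (i : ℕ) y * ψ (k : ℕ) y) ∂ρm)
          = if k = i then (cc j (i : ℕ)) ^ 2 else 0 := by
        intro k
        rw [integral_const_mul, hψorth (i : ℕ) (k : ℕ)]
        by_cases h : k = i
        · subst h
          simp [pow_two]
        · have h' : ¬((i : ℕ) = (k : ℕ)) := fun hh => h (Fin.val_inj.mp hh).symm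
          simp [h, h']
      simp_rw [h2]
      simp
    have hg2 : ∀ y, (φ j y - S y) ^ 2 = (φ j y) ^ 2 - 2 * (φ j y * S y) + (S y) ^ 2 :=
      fun y => by ring
    have h0 : 0 ≤ ∫ y, (φ j y - S y) ^ 2 ∂ρm := integral_nonneg fun y => sq_nonneg _
    have hcalc : (∫ y, (φ j y - S y) ^ 2 ∂ρm)
        = nph j - 2 * (∑ i : Fin n, (cc j (i : ℕ)) ^ 2) + (∑ i : Fin n, (cc j (i : ℕ)) ^ 2) := by
      simp_rw [hg2]
      have hIa : Integrable (fun y => 2 * (φ j y * S y)) ρm := hIφS.const_mul 2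
      have hIb : Integrable (fun y => (φ j y) ^ 2 - 2 * (φ j y * S y)) ρm := (hIφ2 j).sub hIa
      rw [integral_add hIb hIS2, integral_sub (hIφ2 j) hIa, integral_const_mul,
        hstep1, hstep2, ← nph_eq]
    rw [hcalc] at h0
    linarith
  -- ### the constant
  set C' : ℝ := C * C * (2 : ℝ) ^ a with hC'_def
  have hC'pos : 0 < C' := by rw [hC'_def]; positivity
  -- ### main estimate
  have main : ∀ m : ℕ, a < b * m →
      lamρ m ≤ C' * (1 / b ^ (a + 1)) * ∫ u in Set.Ioi (b * m), u ^ a * Real.exp (-u) := by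
    intro m hm
    have hm1 : 1 ≤ m := by
      rcases Nat.eq_zero_or_pos m with h | h
      · subst h; simp at hm; linarith
      · exact h
    -- null vector
    obtain ⟨α, hα1, hαker⟩ : ∃ α : Fin (m + 1) → ℝ,
        (∑ i : Fin (m + 1), (α i) ^ 2) = 1 ∧
        ∀ j : Fin m, (∑ i : Fin (m + 1), α i * cc (j : ℕ) (i : ℕ)) = 0 := by
      set M : Matrix (Fin m) (Fin (m + 1)) ℝ := fun j i => cc (j : ℕ) (i : ℕ) with hM_def
      have hker : LinearMap.ker M.mulVecLin ≠ ⊥ := by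
        intro hbot
        have hinj : Function.Injective M.mulVecLin := LinearMap.ker_eq_bot.mp hbot
        have hle := LinearMap.finrank_le_finrank_of_injective hinj
        rw [Module.finrank_fin_fun, Module.finrank_fin_fun] at hle
        omega
      obtain ⟨v, hvker, hv0⟩ := Submodule.exists_mem_ne_zero_of_ne_bot hker
      have hsum_pos : 0 < ∑ i : Fin (m + 1), (v i) ^ 2 := by
        obtain ⟨i0, hi0⟩ := Function.ne_iff.mp hv0
        have hi0' : (v i0) ^ 2 ≠ 0 := pow_ne_zero 2 hi0
        exact Finset.sum_pos' (fun i _ => sq_nonneg _)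
          ⟨i0, Finset.mem_univ _, lt_of_le_of_ne (sq_nonneg _) (Ne.symm hi0')⟩
      set s0 : ℝ := Real.sqrt (∑ i : Fin (m + 1), (v i) ^ 2) with hs0_def
      have hs0pos : 0 < s0 := Real.sqrt_pos.mpr hsum_pos
      refine ⟨fun i => v i / s0, ?_, ?_⟩
      · simp_rw [div_pow]
        rw [← Finset.sum_div, hs0_def, Real.sq_sqrt hsum_pos.le, div_self hsum_pos.ne']
      · intro j
        have hMv : M.mulVec v = 0 := by
          have := LinearMap.mem_ker.mp hvker
          rwa [Matrix.mulVecLin_apply] at this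
        have hj : (M.mulVec v) j = 0 := by rw [hMv]; rfl
        have hdot : ∑ i : Fin (m + 1), cc (j : ℕ) (i : ℕ) * v i = 0 := by
          simpa [Matrix.mulVec, dotProduct, hM_def] using hj
        calc ∑ i : Fin (m + 1), v i / s0 * cc (j : ℕ) (i : ℕ)
            = (∑ i : Fin (m + 1), cc (j : ℕ) (i : ℕ) * v i) / s0 := by
              rw [Finset.sum_div]
              apply Finset.sum_congr rfl
              intro i _
              ring
          _ = 0 := by rw [hdot, zero_div]
    set w : ℕ → ℝ := fun j => ∑ i : Fin (m + 1), α i * cc j (i : ℕ) with hw_def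
    have hwm : ∀ j, j < m → w j = 0 := by
      intro j hj
      have := hαker ⟨j, hj⟩
      simpa [hw_def] using this
    -- the Gram expansion
    have hpair : ∀ i : Fin (m + 1), HasSum
        (fun j => ∑ k : Fin (m + 1), (α i * α k) * (lam j * cc j (i : ℕ) * cc j (k : ℕ)))
        (∑ k : Fin (m + 1), (α i * α k)
          * (lamρ (k : ℕ) * if (k : ℕ) = (i : ℕ) then 1 else 0)) :=
      fun i => hasSum_sum (fun k _ => (key (i : ℕ) (k : ℕ)).mul_left _)
    have houter : HasSum
        (fun j => ∑ i : Fin (m + 1), ∑ k : Fin (m + 1),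
          (α i * α k) * (lam j * cc j (i : ℕ) * cc j (k : ℕ)))
        (∑ i : Fin (m + 1), ∑ k : Fin (m + 1),
          (α i * α k) * (lamρ (k : ℕ) * if (k : ℕ) = (i : ℕ) then 1 else 0)) :=
      hasSum_sum (fun i _ => hpair i)
    have hfun : (fun j => ∑ i : Fin (m + 1), ∑ k : Fin (m + 1),
        (α i * α k) * (lam j * cc j (i : ℕ) * cc j (k : ℕ)))
        = fun j => lam j * (w j) ^ 2 := by
      funext j
      have hwsq : (w j) ^ 2 = ∑ i : Fin (m + 1), ∑ k : Fin (m + 1),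
          (α i * cc j (i : ℕ)) * (α k * cc j (k : ℕ)) := by
        rw [hw_def, pow_two]
        exact Finset.sum_mul_sum _ _ _ _
      rw [hwsq, Finset.mul_sum]
      apply Finset.sum_congr rfl
      intro i _
      rw [Finset.mul_sum]
      apply Finset.sum_congr rfl
      intro k _
      ring
    have hval : (∑ i : Fin (m + 1), ∑ k : Fin (m + 1),
        (α i * α k) * (lamρ (k : ℕ) * if (k : ℕ) = (i : ℕ) then 1 else 0))
        = ∑ i : Fin (m + 1), (α i) ^ 2 * lamρ (i : ℕ) := by
      apply Finset.sum_congr rfl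
      intro i _
      rw [Finset.sum_eq_single i]
      · simp only [if_pos rfl, if_true, eq_self_iff_true, mul_one, pow_two]
      · intro k _ hki
        have h' : ¬((k : ℕ) = (i : ℕ)) := fun hh => hki (Fin.val_inj.mp hh)
        simp [h']
      · intro h
        exact absurd (Finset.mem_univ i) h
    rw [hfun, hval] at houter
    have hT_ge : lamρ m ≤ ∑ i : Fin (m + 1), (α i) ^ 2 * lamρ (i : ℕ) := by
      calc lamρ m = (∑ i : Fin (m + 1), (α i) ^ 2) * lamρ m := by rw [hα1, one_mul]
        _ = ∑ i : Fin (m + 1), (α i) ^ 2 * lamρ m := by rw [Finset.sum_mul]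
        _ ≤ ∑ i : Fin (m + 1), (α i) ^ 2 * lamρ (i : ℕ) := by
            apply Finset.sum_le_sum
            intro i _
            exact mul_le_mul_of_nonneg_left
              (hlamρ_anti (Nat.lt_succ_iff.mp i.isLt)) (sq_nonneg _)
    have htsum : lamρ m ≤ ∑' j, lam j * (w j) ^ 2 := by
      rw [houter.tsum_eq]
      exact hT_ge
    refine le_trans htsum (Summable.tsum_le_of_sum_le houter.summable ?_)
    intro s
    have hsum_eq : (∑ j ∈ s, lam j * (w j) ^ 2)
        = ∑ j ∈ s.filter (fun j => m ≤ j), lam j * (w j) ^ 2 := by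
      symm
      apply Finset.sum_subset (Finset.filter_subset _ _)
      intro j hj hnj
      have hjm : j < m := by
        by_contra h
        exact hnj (Finset.mem_filter.mpr ⟨hj, Nat.le_of_not_lt h⟩)
      rw [hwm j hjm]
      ring
    rw [hsum_eq]
    have hterm : ∀ j ∈ s.filter (fun j => m ≤ j),
        lam j * (w j) ^ 2 ≤ (C * C * 2 ^ a / b ^ (a + 1))
          * ∫ u in Set.Ioc (b * (j : ℝ)) (b * ((j : ℝ) + 1)), u ^ a * Real.exp (-u) := by
      intro j hj
      have hmj : m ≤ j := (Finset.mem_filter.mp hj).2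
      have hj1 : 1 ≤ j := le_trans hm1 hmj
      have hw2 : (w j) ^ 2 ≤ nph j := by
        have hcs := Finset.sum_mul_sq_le_sq_mul_sq Finset.univ α
          (fun i : Fin (m + 1) => cc j (i : ℕ))
        rw [hα1, one_mul] at hcs
        have hw_eq : w j = ∑ i : Fin (m + 1), α i * cc j (i : ℕ) := by rw [hw_def]
        rw [hw_eq]
        exact le_trans hcs (bessel (m + 1) j)
      have ht1 : lam j * (w j) ^ 2 ≤ lam j * nph j :=
        mul_le_mul_of_nonneg_left hw2 (hlam_pos j).le
      have ht3 := interval_bound ha hb hj1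
      calc lam j * (w j) ^ 2
          ≤ (C * C) * (((j : ℝ) + 1) ^ a * Real.exp (-b * ((j : ℝ) + 1))) :=
            le_trans ht1 (hlamnph j)
        _ ≤ (C * C) * (((2 : ℝ) ^ a / b ^ (a + 1))
              * ∫ u in Set.Ioc (b * (j : ℝ)) (b * ((j : ℝ) + 1)), u ^ a * Real.exp (-u)) :=
            mul_le_mul_of_nonneg_left ht3 (by positivity)
        _ = (C * C * 2 ^ a / b ^ (a + 1))
              * ∫ u in Set.Ioc (b * (j : ℝ)) (b * ((j : ℝ) + 1)), u ^ a * Real.exp (-u) := by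
            ring
    calc (∑ j ∈ s.filter (fun j => m ≤ j), lam j * (w j) ^ 2)
        ≤ ∑ j ∈ s.filter (fun j => m ≤ j), (C * C * 2 ^ a / b ^ (a + 1))
            * ∫ u in Set.Ioc (b * (j : ℝ)) (b * ((j : ℝ) + 1)), u ^ a * Real.exp (-u) :=
          Finset.sum_le_sum hterm
      _ = (C * C * 2 ^ a / b ^ (a + 1)) * ∑ j ∈ s.filter (fun j => m ≤ j),
            ∫ u in Set.Ioc (b * (j : ℝ)) (b * ((j : ℝ) + 1)), u ^ a * Real.exp (-u) := by
          rw [Finset.mul_sum]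
      _ ≤ (C * C * 2 ^ a / b ^ (a + 1)) * ∫ u in Set.Ioi (b * (m : ℝ)), u ^ a * Real.exp (-u) :=
          mul_le_mul_of_nonneg_left
            (finsum_Ioc_le ha hb hm1 _ (fun j hj => (Finset.mem_filter.mp hj).2))
            (by positivity)
      _ = C' * (1 / b ^ (a + 1)) * ∫ u in Set.Ioi (b * (m : ℝ)), u ^ a * Real.exp (-u) := by
          rw [hC'_def]
          ring
  -- ### the second inequality
  have second : ∀ m : ℕ, a < b * m →
      C' * (1 / b ^ (a + 1)) * (∫ u in Set.Ioi (b * m), u ^ a * Real.exp (-u)) ≤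
        C' * (b * m) ^ (a + 1) * Real.exp (-(b * m)) / (b ^ (a + 1) * (b * m - a)) := by
    intro m hm
    have hg := gamma_tail_bound ha hm
    have hb1 : (0 : ℝ) < b ^ (a + 1) := Real.rpow_pos_of_pos hb _
    have hden : (0 : ℝ) < b * m - a := by linarith
    calc C' * (1 / b ^ (a + 1)) * (∫ u in Set.Ioi (b * m), u ^ a * Real.exp (-u))
        ≤ C' * (1 / b ^ (a + 1)) * ((b * m) ^ (a + 1) * Real.exp (-(b * m)) / (b * m - a)) :=
          mul_le_mul_of_nonneg_left hg (by positivity)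
      _ = C' * (b * m) ^ (a + 1) * Real.exp (-(b * m)) / (b ^ (a + 1) * (b * m - a)) := by
          field_simp
  refine ⟨⟨C', hC'pos, fun m hm => ⟨main m hm, second m hm⟩⟩, ?_⟩
  -- ### the asymptotic consequence
  refine ⟨C' * (2 / b), by positivity, Nat.ceil ((2 * a + 1) / b) + 1, ?_⟩
  intro m hM
  have hm1 : 1 ≤ m := by omega
  have hmR : (1 : ℝ) ≤ (m : ℝ) := by exact_mod_cast hm1
  have hceil : ((Nat.ceil ((2 * a + 1) / b) : ℕ) : ℝ) ≤ (m : ℝ) := by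
    have : Nat.ceil ((2 * a + 1) / b) ≤ m := by omega
    exact_mod_cast this
  have hbm_ge : 2 * a + 1 ≤ b * m := by
    have h1 : (2 * a + 1) / b ≤ ((Nat.ceil ((2 * a + 1) / b) : ℕ) : ℝ) := Nat.le_ceil _
    have h2 : (2 * a + 1) / b ≤ (m : ℝ) := le_trans h1 hceil
    calc 2 * a + 1 = ((2 * a + 1) / b) * b := by field_simp
      _ ≤ (m : ℝ) * b := mul_le_mul_of_nonneg_right h2 hb.le
      _ = b * m := mul_comm _ _
  have hm : a < b * m := by linarith
  have h1 := main m hm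
  have h2 := second m hm
  have hbm : 0 < b * (m : ℝ) := by nlinarith
  have hden : (0 : ℝ) < b * m - a := by linarith
  have hb1 : (0 : ℝ) < b ^ (a + 1) := Real.rpow_pos_of_pos hb _
  have h3 : C' * (b * m) ^ (a + 1) * Real.exp (-(b * m)) / (b ^ (a + 1) * (b * m - a))
      ≤ (C' * (2 / b)) * (m : ℝ) ^ a * Real.exp (-(b * m)) := by
    have e1 : (b * (m : ℝ)) ^ (a + 1) = b ^ (a + 1) * (m : ℝ) ^ (a + 1) :=
      Real.mul_rpow hb.le (by linarith)
    have e2 : (m : ℝ) ^ (a + 1) = (m : ℝ) ^ a * (m : ℝ) := by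
      rw [Real.rpow_add (by linarith), Real.rpow_one]
    have hfrac : (m : ℝ) / (b * (m : ℝ) - a) ≤ 2 / b := by
      rw [div_le_div_iff₀ hden hb]
      nlinarith
    calc C' * (b * (m : ℝ)) ^ (a + 1) * Real.exp (-(b * (m : ℝ)))
          / (b ^ (a + 1) * (b * (m : ℝ) - a))
        = (C' * Real.exp (-(b * (m : ℝ))) * (m : ℝ) ^ a) * ((m : ℝ) / (b * (m : ℝ) - a)) := by
          rw [e1, e2]
          field_simp
      _ ≤ (C' * Real.exp (-(b * (m : ℝ))) * (m : ℝ) ^ a) * (2 / b) :=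
          mul_le_mul_of_nonneg_left hfrac (by positivity)
      _ = (C' * (2 / b)) * (m : ℝ) ^ a * Real.exp (-(b * (m : ℝ))) := by ring
  linarith
end

section
/- For every real n × N matrix A and every λ > 0, the spectral norm of the matrix (A(AᵀA + λI_N)^{-1}Aᵀ − I_n)A satisfies ‖(A(AᵀA + λI_N)^{-1}Aᵀ − I_n)A‖₂² ≤ λ/4; equivalently, if μ_1 ≥ ⋯ ≥ μ_N ≥ 0 are the singular values of A, then max_{1≤j≤N} λ² μ_j² / (μ_j² + λ)² ≤ λ/4. -/
open Matrix

lemma dot_self_nonneg' {N : ℕ} (u : Fin N → ℝ) : 0 ≤ u ⬝ᵥ u :=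
  Finset.sum_nonneg fun i _ => mul_self_nonneg _

/-- (The bound (4.15).)  For every real `n × N` matrix `A` and `λ > 0`,
the spectral norm of `(A(AᵀA + λI_N)⁻¹Aᵀ − I_n)A` squared is at most `λ/4`, expressed
through the operator characterization `Σ_i (Mv)_i² ≤ (λ/4) Σ_j v_j²`; equivalently, if
`μ_1 ≥ ⋯ ≥ μ_N ≥ 0` are the singular values of `A` (`μs j ≥ 0` with `(μs j)²` the
eigenvalues of `AᵀA`), then `λ² μ_j²/(μ_j² + λ)² ≤ λ/4` for every `j`. -/
theorem residual_matrix_spectral_norm_bound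
    (n N : ℕ) (A : Matrix (Fin n) (Fin N) ℝ) (lamb : ℝ) (hlamb : 0 < lamb)
    (μs : Fin N → ℝ)
    (hμs_nonneg : ∀ j, 0 ≤ μs j)
    (hμs_sorted : ∀ i j : Fin N, i ≤ j → μs j ≤ μs i)
    (hμs : ∃ hH : (Aᵀ * A).IsHermitian, ∃ e : Equiv.Perm (Fin N),
      ∀ j, (μs j) ^ 2 = hH.eigenvalues (e j)) :
    (∀ v : Fin N → ℝ,
      (∑ i, (((A * (Aᵀ * A + lamb • (1 : Matrix (Fin N) (Fin N) ℝ))⁻¹ * Aᵀ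
          - (1 : Matrix (Fin n) (Fin n) ℝ)) * A).mulVec v i) ^ 2)
        ≤ (lamb / 4) * ∑ j, (v j) ^ 2) ∧
    (∀ j : Fin N, lamb ^ 2 * (μs j) ^ 2 / ((μs j) ^ 2 + lamb) ^ 2 ≤ lamb / 4) := by
  constructor
  · intro v
    set B : Matrix (Fin N) (Fin N) ℝ := Aᵀ * A with hBdef
    set S : Matrix (Fin N) (Fin N) ℝ := B + lamb • (1 : Matrix (Fin N) (Fin N) ℝ) with hSdef
    have hBpsd : B.PosSemidef := by
      have := Matrix.posSemidef_conjTranspose_mul_self A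
      simpa [Matrix.conjTranspose_eq_transpose_of_trivial, hBdef] using this
    have hSpd : S.PosDef := by
      rw [hSdef, Matrix.smul_one_eq_diagonal]
      exact Matrix.PosDef.posSemidef_add hBpsd (Matrix.PosDef.diagonal fun _ => hlamb)
    have hSunit : IsUnit S.det := hSpd.det_pos.ne'.isUnit
    have hinv : S⁻¹ * S = 1 := Matrix.nonsing_inv_mul S hSunit
    have hinv' : S * S⁻¹ = 1 := Matrix.mul_nonsing_inv S hSunit
    -- rewrite the matrix as -lamb • (A * S⁻¹)
    have hM : (A * S⁻¹ * Aᵀ - (1 : Matrix (Fin n) (Fin n) ℝ)) * A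
        = -(lamb • (A * S⁻¹)) := by
      have hBS : B = S - lamb • (1 : Matrix (Fin N) (Fin N) ℝ) := by
        rw [hSdef]; abel
      rw [Matrix.sub_mul, Matrix.one_mul, Matrix.mul_assoc (A * S⁻¹) Aᵀ A, ← hBdef, hBS,
        Matrix.mul_sub, Matrix.mul_smul, Matrix.mul_one, Matrix.mul_assoc A S⁻¹ S, hinv,
        Matrix.mul_one]
      abel
    set w : Fin N → ℝ := S⁻¹.mulVec v with hw
    have hvw : v = S.mulVec w := by
      rw [hw, Matrix.mulVec_mulVec, hinv', Matrix.one_mulVec]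
    have hMv : ((A * S⁻¹ * Aᵀ - (1 : Matrix (Fin n) (Fin n) ℝ)) * A).mulVec v
        = -(lamb • A.mulVec w) := by
      rw [hM]
      rw [Matrix.neg_mulVec, Matrix.smul_mulVec, ← Matrix.mulVec_mulVec, ← hw]
    rw [hMv]
    -- express sums as dot products
    have hsum1 : ∑ i, ((-(lamb • A.mulVec w)) i) ^ 2
        = lamb ^ 2 * (A.mulVec w ⬝ᵥ A.mulVec w) := by
      simp only [dotProduct, Pi.neg_apply, Pi.smul_apply, smul_eq_mul,
        Finset.mul_sum]
      congr 1; ext i; ring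
    have hsum2 : ∑ j, (v j) ^ 2 = S.mulVec w ⬝ᵥ S.mulVec w := by
      rw [hvw]; simp only [dotProduct]; congr 1; ext j; ring
    rw [hsum1, hsum2]
    -- reduce to quadratic forms in w
    have hAA : A.mulVec w ⬝ᵥ A.mulVec w = w ⬝ᵥ B.mulVec w := by
      rw [hBdef, ← Matrix.mulVec_mulVec, Matrix.dotProduct_mulVec w Aᵀ,
        Matrix.vecMul_transpose, dotProduct_comm]
    have hSw : S.mulVec w = B.mulVec w + lamb • w := by
      rw [hSdef, Matrix.add_mulVec, Matrix.smul_mulVec, Matrix.one_mulVec]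
    set x : Fin N → ℝ := B.mulVec w with hx
    have hkey : 0 ≤ (x - lamb • w) ⬝ᵥ (x - lamb • w) := dot_self_nonneg' _
    have hwx : w ⬝ᵥ x = x ⬝ᵥ w := dotProduct_comm w x
    rw [hAA, hSw]
    simp only [dotProduct_add, add_dotProduct, dotProduct_sub,
      sub_dotProduct, dotProduct_smul, smul_dotProduct,
      smul_eq_mul] at hkey ⊢
    nlinarith [hkey, hlamb]
  · intro j
    have h1 : 0 < ((μs j) ^ 2 + lamb) ^ 2 := by positivity
    rw [div_le_iff₀ h1]
    nlinarith [sq_nonneg ((μs j) ^ 2 - lamb), sq_nonneg (μs j), hlamb.le]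
end
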